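/- Let k be a field of characteristic p ≥ 2 and a ∈ k \ k^p. Then the k-algebra B = k[X,Y]/(Y^p − X − aX^p) is not a unique factorization domain, but B ⊗_k k(a^{1/p}) is isomorphic to a polynomial ring in one variable over k(a^{1/p}). -/

import Mathlib

set_option linter.unusedSectionVars false
set_option synthInstance.maxHeartbeats 1000000
set_option maxHeartbeats 1000000

open Polynomial

namespace Stmt5Aux

lemma charL (k : Type*) [Field k] (p : ℕ) (L : Type*) [Field L] [Algebra k L] [CharP k p] :
    CharP L p := charP_of_injective_algebraMap (algebraMap k L).injective p

variable (k : Type*) [Field k] (p : ℕ) [hp : Fact p.Prime] [CharP k p]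
    (a : k) (L : Type*) [Field L] [Algebra k L] (b : L)

noncomputable abbrev relp : MvPolynomial (Fin 2) k :=
  MvPolynomial.X 1 ^ p - MvPolynomial.X 0 - MvPolynomial.C a * MvPolynomial.X 0 ^ p

noncomputable abbrev Bq := MvPolynomial (Fin 2) k ⧸ Ideal.span {relp k p a}

noncomputable def phi0 : MvPolynomial (Fin 2) k →ₐ[k] Polynomial L :=
  MvPolynomial.aeval ![Polynomial.X ^ p, Polynomial.X + Polynomial.C b * Polynomial.X ^ p]

lemma phi0_X0 : phi0 k p L b (MvPolynomial.X 0) = Polynomial.X ^ p := by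
  simp [phi0]

lemma phi0_X1 : phi0 k p L b (MvPolynomial.X 1)
    = Polynomial.X + Polynomial.C b * Polynomial.X ^ p := by
  simp [phi0]

lemma phi0_C (c : k) : phi0 k p L b (MvPolynomial.C c) = Polynomial.C (algebraMap k L c) := by
  simp [phi0, MvPolynomial.aeval_C, Polynomial.algebraMap_apply]

lemma phi0_rel (hb : b ^ p = algebraMap k L a) : phi0 k p L b (relp k p a) = 0 := by
  haveI := charL k p L
  simp only [relp, map_sub, map_mul, map_pow, phi0_X0, phi0_X1, phi0_C]
  rw [add_pow_char, mul_pow, ← Polynomial.C_pow, hb]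
  ring

end Stmt5Aux
namespace Stmt5Aux

section Main

variable (k : Type*) [Field k] (p : ℕ) [hp : Fact p.Prime] [CharP k p]
    (a : k) (L : Type*) [Field L] [Algebra k L] (b : L)

noncomputable def phi (hb : b ^ p = algebraMap k L a) : Bq k p a →ₐ[k] Polynomial L :=
  Ideal.Quotient.liftₐ _ (phi0 k p L b) (by
    intro x hx
    rw [Ideal.mem_span_singleton] at hx
    obtain ⟨c, rfl⟩ := hx
    rw [map_mul, phi0_rel k p a L b hb, zero_mul])

noncomputable def Xb : Bq k p a := Ideal.Quotient.mk _ (MvPolynomial.X 0)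
noncomputable def Yb : Bq k p a := Ideal.Quotient.mk _ (MvPolynomial.X 1)

variable (hb : b ^ p = algebraMap k L a)

instance instRHCfT : RingHomClass (TensorProduct k L (Bq k p a) →ₐ[L] L[X])
    (TensorProduct k L (Bq k p a)) L[X] where
  map_mul f := f.map_mul'
  map_one f := f.map_one'
  map_add f := f.map_add'
  map_zero f := f.map_zero'

instance instRHCgT : RingHomClass (L[X] →ₐ[L] TensorProduct k L (Bq k p a))
    L[X] (TensorProduct k L (Bq k p a)) where
  map_mul f := f.map_mul'
  map_one f := f.map_one'
  map_add f := f.map_add'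
  map_zero f := f.map_zero'

lemma phi_mk (P : MvPolynomial (Fin 2) k) :
    phi k p a L b hb (Ideal.Quotient.mk _ P) = phi0 k p L b P := by
  simp [phi, Ideal.Quotient.liftₐ_apply]
  rfl

lemma phi_Xb : phi k p a L b hb (Xb k p a) = Polynomial.X ^ p := by
  rw [Xb, phi_mk, phi0_X0]

lemma phi_Yb : phi k p a L b hb (Yb k p a)
    = Polynomial.X + Polynomial.C b * Polynomial.X ^ p := by
  rw [Yb, phi_mk, phi0_X1]

lemma mk_C_eq : (Ideal.Quotient.mk (Ideal.span {relp k p a})) (MvPolynomial.C a)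
    = algebraMap k (Bq k p a) a := rfl

set_option synthInstance.maxHeartbeats 400000 in
lemma rel_Bq : (Yb k p a) ^ p = Xb k p a + algebraMap k (Bq k p a) a * (Xb k p a) ^ p := by
  have h : (Ideal.Quotient.mk (Ideal.span {relp k p a})) (relp k p a) = 0 :=
    Ideal.Quotient.eq_zero_iff_mem.2 (Ideal.subset_span rfl)
  have h2 : (Yb k p a) ^ p - Xb k p a - algebraMap k (Bq k p a) a * (Xb k p a) ^ p = 0 := by
    rw [← h, ← mk_C_eq]
    simp only [relp, map_sub, map_mul, map_pow, Xb, Yb]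
  linear_combination h2

noncomputable def fT (hb : b ^ p = algebraMap k L a) :
    (TensorProduct k L (Bq k p a)) →ₐ[L] Polynomial L :=
  Algebra.TensorProduct.lift (Algebra.ofId L (Polynomial L)) (phi k p a L b hb)
    (fun _ _ => Commute.all _ _)

lemma fT_tmul (c : L) (x : Bq k p a) :
    fT k p a L b hb (c ⊗ₜ x) = Polynomial.C c * phi k p a L b hb x := by
  simp [fT, Algebra.TensorProduct.lift_tmul, Algebra.ofId_apply, Polynomial.algebraMap_eq]

lemma fT_one_tmul (x : Bq k p a) :
    fT k p a L b hb ((1 : L) ⊗ₜ x) = phi k p a L b hb x := by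
  rw [fT_tmul, Polynomial.C_1, one_mul]

lemma charT (hb : b ^ p = algebraMap k L a) : CharP (TensorProduct k L (Bq k p a)) p := by
  haveI := charL k p L
  constructor
  intro n
  constructor
  · intro h
    have h2 := congrArg (fT k p a L b hb) h
    rw [map_zero] at h2
    exact (CharP.cast_eq_zero_iff (Polynomial L) p n).1
      (by rw [← map_natCast (fT k p a L b hb) n]; exact h2)
  · intro hdvd
    rw [← map_natCast (algebraMap k (TensorProduct k L (Bq k p a))) n,
      (CharP.cast_eq_zero_iff k p n).2 hdvd, map_zero]

noncomputable def w0 : TensorProduct k L (Bq k p a) :=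
  (1 : L) ⊗ₜ Yb k p a - b ⊗ₜ Xb k p a

noncomputable def gT : Polynomial L →ₐ[L] TensorProduct k L (Bq k p a) :=
  Polynomial.aeval (w0 k p a L b)

lemma fg : (fT k p a L b hb).comp (gT k p a L b) = AlgHom.id L (Polynomial L) := by
  apply Polynomial.algHom_ext
  simp only [AlgHom.coe_comp, Function.comp_apply, gT, Polynomial.aeval_X, AlgHom.coe_id,
    id_eq, w0, map_sub, fT_tmul, fT_one_tmul, phi_Xb, phi_Yb, Polynomial.C_1, one_mul]
  ring

lemma w0_pow (hb : b ^ p = algebraMap k L a) :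
    (w0 k p a L b) ^ p = (1 : L) ⊗ₜ Xb k p a := by
  haveI := charT k p a L b hb
  rw [w0, sub_pow_char ((1:L) ⊗ₜ[k] Yb k p a) (b ⊗ₜ[k] Xb k p a), Algebra.TensorProduct.tmul_pow, Algebra.TensorProduct.tmul_pow, hb,
    one_pow]
  rw [show (algebraMap k L a) ⊗ₜ[k] ((Xb k p a) ^ p)
      = (1 : L) ⊗ₜ (algebraMap k (Bq k p a) a * (Xb k p a) ^ p) by
    rw [Algebra.algebraMap_eq_smul_one, ← Algebra.smul_def, TensorProduct.smul_tmul]]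
  rw [← TensorProduct.tmul_sub]
  congr 1
  rw [rel_Bq]
  ring

lemma gf_onB (x : Bq k p a) :
    gT k p a L b (fT k p a L b hb ((1 : L) ⊗ₜ x)) = (1 : L) ⊗ₜ x := by
  have key : ((gT k p a L b).restrictScalars k).comp
      (((fT k p a L b hb).restrictScalars k).comp
        (Algebra.TensorProduct.includeRight (R := k) (A := L) (B := Bq k p a)))
      = Algebra.TensorProduct.includeRight := by
    apply Ideal.Quotient.algHom_ext
    apply MvPolynomial.algHom_ext
    intro i
    fin_cases i
    · show gT k p a L b (fT k p a L b hb ((1:L) ⊗ₜ Xb k p a)) = (1:L) ⊗ₜ Xb k p a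
      rw [fT_one_tmul, phi_Xb, map_pow, gT, Polynomial.aeval_X, w0_pow k p a L b hb]
    · show gT k p a L b (fT k p a L b hb ((1:L) ⊗ₜ Yb k p a)) = (1:L) ⊗ₜ Yb k p a
      rw [fT_one_tmul, phi_Yb, map_add, map_mul, map_pow, gT, Polynomial.aeval_X,
        Polynomial.aeval_C, w0_pow k p a L b hb]
      rw [show (algebraMap L (TensorProduct k L (Bq k p a))) b = b ⊗ₜ (1 : Bq k p a) from rfl]
      rw [Algebra.TensorProduct.tmul_mul_tmul, one_mul, mul_one, w0]
      ring
  exact congrArg (fun (F : Bq k p a →ₐ[k] TensorProduct k L (Bq k p a)) => F x) key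
    |>.trans rfl |>.symm ▸ (AlgHom.congr_fun key x)

lemma gf : (gT k p a L b).comp (fT k p a L b hb)
    = AlgHom.id L (TensorProduct k L (Bq k p a)) := by
  apply Algebra.TensorProduct.ext'
  intro c x
  have h1 : c ⊗ₜ[k] x = c • ((1 : L) ⊗ₜ[k] x) := by
    rw [TensorProduct.smul_tmul', smul_eq_mul, mul_one]
  simp only [AlgHom.coe_comp, Function.comp_apply, AlgHom.coe_id, id_eq, h1, map_smul]
  congr 1
  exact gf_onB k p a L b hb x

noncomputable def EQ (hb : b ^ p = algebraMap k L a) :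
    (TensorProduct k L (Bq k p a)) ≃ₐ[L] Polynomial L :=
  AlgEquiv.ofAlgHom (fT k p a L b hb) (gT k p a L b) (fg k p a L b hb) (gf k p a L b hb)

lemma EQ_apply (x : TensorProduct k L (Bq k p a)) :
    EQ k p a L b hb x = fT k p a L b hb x := rfl

lemma b_not_in_range (ha : ∀ c : k, c ^ p ≠ a) (hb : b ^ p = algebraMap k L a) :
    b ∉ Set.range (algebraMap k L) := by
  rintro ⟨c, rfl⟩
  rw [← map_pow] at hb
  exact ha c ((algebraMap k L).injective hb)

lemma exists_duals (ha : ∀ c : k, c ^ p ≠ a) (hb : b ^ p = algebraMap k L a) :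
    ∃ g g₁ : L →ₗ[k] k, g 1 = 0 ∧ g b = 1 ∧ g₁ 1 = 1 := by
  have hb_not : b ∉ Set.range (algebraMap k L) := b_not_in_range k p a L b ha hb
  have h1b : (1 : L) ≠ b := by
    intro h
    exact hb_not ⟨1, by rw [map_one, h]⟩
  have hli1 : LinearIndepOn k id ({(1 : L)} : Set L) :=
    (linearIndepOn_singleton_iff k).2 one_ne_zero
  have hbspan : b ∉ Submodule.span k ({(1 : L)} : Set L) := by
    intro h
    rw [Submodule.mem_span_singleton] at h
    obtain ⟨c, hc⟩ := h
    exact hb_not ⟨c, by rw [Algebra.algebraMap_eq_smul_one]; exact hc⟩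
  have hli : LinearIndepOn k id (insert b {(1 : L)} : Set L) :=
    hli1.insert (by simpa using hbspan)
  let bas := Module.Basis.extend hli
  have hmem : (insert b {(1 : L)} : Set L) ⊆ hli.extend (Set.subset_univ _) :=
    hli.subset_extend _
  have hbmem : b ∈ hli.extend (Set.subset_univ _) := hmem (Set.mem_insert _ _)
  have h1mem : (1 : L) ∈ hli.extend (Set.subset_univ _) :=
    hmem (Set.mem_insert_of_mem _ rfl)
  refine ⟨bas.coord ⟨b, hbmem⟩, bas.coord ⟨(1 : L), h1mem⟩, ?_, ?_, ?_⟩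
  · have e1 : bas ⟨(1 : L), h1mem⟩ = (1 : L) := Module.Basis.extend_apply_self hli _
    have h := congrArg (fun v => (bas.repr v) ⟨b, hbmem⟩) e1
    rw [Module.Basis.coord_apply, ← h]
    rw [Module.Basis.repr_self, Finsupp.single_eq_of_ne]
    intro hc
    exact h1b (Subtype.mk_eq_mk.mp hc.symm)
  · have e1 : bas ⟨b, hbmem⟩ = b := Module.Basis.extend_apply_self hli _
    have h := congrArg (fun v => (bas.repr v) ⟨b, hbmem⟩) e1
    rw [Module.Basis.coord_apply, ← h, Module.Basis.repr_self, Finsupp.single_eq_same]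
  · have e1 : bas ⟨(1 : L), h1mem⟩ = (1 : L) := Module.Basis.extend_apply_self hli _
    have h := congrArg (fun v => (bas.repr v) ⟨(1 : L), h1mem⟩) e1
    rw [Module.Basis.coord_apply, ← h, Module.Basis.repr_self, Finsupp.single_eq_same]

noncomputable def PhiMap (g : L →ₗ[k] k) :
    TensorProduct k L (Bq k p a) →ₗ[k] Bq k p a :=
  (TensorProduct.lid k (Bq k p a)).toLinearMap ∘ₗ LinearMap.rTensor (Bq k p a) g

lemma PhiMap_tmul (g : L →ₗ[k] k) (c : L) (x : Bq k p a) :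
    PhiMap k p a L g (c ⊗ₜ x) = g c • x := by
  simp [PhiMap]

lemma phi_inj (ha : ∀ c : k, c ^ p ≠ a) : Function.Injective (phi k p a L b hb) := by
  obtain ⟨g, g₁, hg1, hgb, hg11⟩ := exists_duals k p a L b ha hb
  intro x y hxy
  have h1 : fT k p a L b hb ((1 : L) ⊗ₜ x) = fT k p a L b hb ((1 : L) ⊗ₜ y) := by
    rw [fT_one_tmul, fT_one_tmul, hxy]
  have h2 : ((1 : L) ⊗ₜ x : TensorProduct k L (Bq k p a)) = (1 : L) ⊗ₜ y :=
    (EQ k p a L b hb).injective h1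
  have h3 := congrArg (PhiMap k p a L g₁) h2
  rwa [PhiMap_tmul, PhiMap_tmul, hg11, one_smul, one_smul] at h3

lemma eval_zero_phi0 (P : MvPolynomial (Fin 2) k) :
    Polynomial.eval 0 (phi0 k p L b P)
      = algebraMap k L (MvPolynomial.eval (fun _ => (0 : k)) P) := by
  induction P using MvPolynomial.induction_on with
  | C c => simp [phi0_C k p L b c]
  | add P Q hP hQ => simp [map_add, hP, hQ]
  | mul_X P i hP =>
    fin_cases i <;> simp [map_mul, hP, phi0, zero_pow hp.out.ne_zero]

lemma const_case (ha : ∀ c : k, c ^ p ≠ a) (q : Bq k p a) (c : L)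
    (h : phi k p a L b hb q = Polynomial.C c) :
    ∃ γ : k, q = algebraMap k (Bq k p a) γ ∧ c = algebraMap k L γ := by
  obtain ⟨P, rfl⟩ := Ideal.Quotient.mk_surjective q
  refine ⟨MvPolynomial.eval (fun _ => (0 : k)) P, ?_, ?_⟩
  · apply phi_inj k p a L b hb ha
    rw [h, AlgHom.commutes]
    rw [phi_mk] at h
    have := eval_zero_phi0 k p L b P
    rw [h, Polynomial.eval_C] at this
    rw [Polynomial.algebraMap_apply, ← this]
  · rw [phi_mk] at h
    have := eval_zero_phi0 k p L b P
    rw [h, Polynomial.eval_C] at this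
    exact this

lemma deriv_phi0 (P : MvPolynomial (Fin 2) k) :
    Polynomial.derivative (phi0 k p L b P)
      = phi0 k p L b (MvPolynomial.pderiv 1 P) := by
  haveI := charL k p L
  induction P using MvPolynomial.induction_on with
  | C c => simp [phi0_C]
  | add P Q hP hQ => simp only [map_add, hP, hQ]
  | mul_X P i hP =>
    rw [map_mul, Polynomial.derivative_mul, hP, MvPolynomial.pderiv_mul, map_add, map_mul,
      map_mul]
    fin_cases i
    · rw [show MvPolynomial.X ((fun i => i) (⟨0, by norm_num⟩ : Fin 2))
        = (MvPolynomial.X 0 : MvPolynomial (Fin 2) k) from rfl]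
      rw [phi0_X0, MvPolynomial.pderiv_X_of_ne (by norm_num), Polynomial.derivative_X_pow,
        CharP.cast_eq_zero, Polynomial.C_0, zero_mul, mul_zero, map_zero, mul_zero, add_zero]
    · rw [show MvPolynomial.X ((fun i => i) (⟨1, by norm_num⟩ : Fin 2))
        = (MvPolynomial.X 1 : MvPolynomial (Fin 2) k) from rfl]
      rw [phi0_X1, MvPolynomial.pderiv_X_self, map_one, mul_one]
      rw [Polynomial.derivative_add, Polynomial.derivative_X, Polynomial.derivative_mul,
        Polynomial.derivative_C, Polynomial.derivative_X_pow, CharP.cast_eq_zero,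
        Polynomial.C_0]
      ring

end Main

end Stmt5Aux

open Stmt5Aux in
/-- Let `k` be a field of characteristic `p ≥ 2` and `a ∈ k \ kᵖ`.
Then `B = k[X,Y]/(Yᵖ - X - a Xᵖ)` is not a UFD, but `B ⊗_k k(a^{1/p})` is a polynomial
ring in one variable over `L = k(a^{1/p})` (here `L/k` is any extension generated by a
`p`-th root `b` of `a`). -/
theorem stmt5 (k : Type*) [Field k] (p : ℕ) [hp : Fact p.Prime] [CharP k p]
    (a : k) (ha : ∀ c : k, c ^ p ≠ a)
    (L : Type*) [Field L] [Algebra k L] (b : L)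
    (hb : b ^ p = algebraMap k L a) (hgen : Algebra.adjoin k {b} = ⊤) :
    (¬ ∃ h : IsDomain (MvPolynomial (Fin 2) k ⧸ Ideal.span
        {(MvPolynomial.X 1 : MvPolynomial (Fin 2) k) ^ p - MvPolynomial.X 0
          - MvPolynomial.C a * MvPolynomial.X 0 ^ p}),
      letI := h;
      UniqueFactorizationMonoid (MvPolynomial (Fin 2) k ⧸ Ideal.span
        {(MvPolynomial.X 1 : MvPolynomial (Fin 2) k) ^ p - MvPolynomial.X 0
          - MvPolynomial.C a * MvPolynomial.X 0 ^ p})) ∧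
    Nonempty ((TensorProduct k L (MvPolynomial (Fin 2) k ⧸ Ideal.span
        {(MvPolynomial.X 1 : MvPolynomial (Fin 2) k) ^ p - MvPolynomial.X 0
          - MvPolynomial.C a * MvPolynomial.X 0 ^ p})) ≃ₐ[L] Polynomial L) := by
  constructor
  · rintro ⟨hdom, hufm⟩
    letI := hdom
    letI := hufm
    have hX0 : Xb k p a ≠ 0 := by
      intro h0
      have hphiX := phi_Xb k p a L b hb
      rw [h0, map_zero] at hphiX
      exact pow_ne_zero p (Polynomial.X_ne_zero (R := L)) hphiX.symm
    have hXnu : ¬ IsUnit (Xb k p a) := by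
      intro hu
      have h2 : IsUnit ((Polynomial.X : Polynomial L) ^ p) := by
        rw [← phi_Xb k p a L b hb]
        exact hu.map _
      have hp1 : p - 1 + 1 = p := Nat.succ_pred_eq_of_pos hp.out.pos
      rw [← hp1, pow_succ] at h2
      exact Polynomial.not_isUnit_X (isUnit_of_mul_isUnit_right h2)
    obtain ⟨q, hqirr, hqdvd⟩ := WfDvdMonoid.exists_irreducible_factor hXnu hX0
    have hqprime : Prime q := (UniqueFactorizationMonoid.irreducible_iff_prime).1 hqirr
    have hXdvdYp : Xb k p a ∣ (Yb k p a) ^ p := by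
      refine ⟨1 + algebraMap k _ a * (Xb k p a) ^ (p - 1), ?_⟩
      rw [rel_Bq]
      have hp2 : Xb k p a * (Xb k p a) ^ (p - 1) = (Xb k p a) ^ p := by
        rw [← pow_succ', Nat.sub_add_cancel hp.out.one_le]
      rw [← hp2]
      ring
    have hqY : q ∣ Yb k p a := hqprime.dvd_of_dvd_pow (dvd_trans hqdvd hXdvdYp)
    have hd1 : phi k p a L b hb q ∣ (Polynomial.X : Polynomial L) ^ p := by
      have h := map_dvd (phi k p a L b hb) hqdvd
      rwa [phi_Xb] at h
    have hd2 : phi k p a L b hb q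
        ∣ Polynomial.X + Polynomial.C b * Polynomial.X ^ p := by
      have h := map_dvd (phi k p a L b hb) hqY
      rwa [phi_Yb] at h
    have hdX : phi k p a L b hb q ∣ (Polynomial.X : Polynomial L) := by
      have h := dvd_sub hd2 (Dvd.dvd.mul_left hd1 (Polynomial.C b))
      simpa using h
    obtain ⟨r, hr⟩ := hdX
    rcases (Polynomial.prime_X (R := L)).irreducible.isUnit_or_isUnit hr with hu | hu
    · obtain ⟨c, hcu, hc⟩ := Polynomial.isUnit_iff.1 hu
      obtain ⟨γ, hqeq, hγ⟩ := const_case k p a L b hb ha q c hc.symm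
      have hγ0 : γ ≠ 0 := by
        rintro rfl
        rw [map_zero] at hqeq
        exact hqprime.ne_zero hqeq
      exact hqprime.not_unit (hqeq ▸ (isUnit_iff_ne_zero.2 hγ0).map (algebraMap k (Bq k p a)))
    · obtain ⟨c, hcu, hc⟩ := Polynomial.isUnit_iff.1 hu
      have hc0 : c ≠ 0 := hcu.ne_zero
      rw [← hc] at hr
      have hphiq : phi k p a L b hb q = Polynomial.C c⁻¹ * Polynomial.X := by
        have h2 : Polynomial.C c⁻¹ * ((phi k p a L b hb q) * Polynomial.C c)
            = phi k p a L b hb q := by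
          rw [mul_comm (phi k p a L b hb q) (Polynomial.C c), ← mul_assoc,
            ← Polynomial.C_mul, inv_mul_cancel₀ hc0, Polynomial.C_1, one_mul]
        rw [← hr] at h2
        exact h2.symm
      obtain ⟨P, hP⟩ := Ideal.Quotient.mk_surjective q
      have hder : phi k p a L b hb (Ideal.Quotient.mk _ (MvPolynomial.pderiv 1 P))
          = Polynomial.C c⁻¹ := by
        rw [phi_mk, ← deriv_phi0 k p L b P]
        have h2 : phi0 k p L b P = phi k p a L b hb q := by
          rw [← hP, phi_mk]
        rw [h2, hphiq, Polynomial.derivative_C_mul_X]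
      obtain ⟨γ, hmkeq, hγ⟩ := const_case k p a L b hb ha _ c⁻¹ hder
      have hγ0 : γ ≠ 0 := by
        rintro rfl
        rw [map_zero] at hγ
        exact inv_ne_zero hc0 hγ
      have halg : algebraMap k (Polynomial L) γ⁻¹ = Polynomial.C c := by
        rw [Polynomial.algebraMap_apply, map_inv₀, ← hγ, inv_inv]
      have hu2 : phi k p a L b hb (q * algebraMap k (Bq k p a) γ⁻¹) = Polynomial.X := by
        rw [map_mul, hphiq, AlgHom.commutes, halg, mul_comm, ← mul_assoc, ← Polynomial.C_mul,
          mul_inv_cancel₀ hc0, Polynomial.C_1, one_mul]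
      have hYu : phi k p a L b hb (Yb k p a - q * algebraMap k (Bq k p a) γ⁻¹)
          = Polynomial.C b * Polynomial.X ^ p := by
        rw [map_sub, phi_Yb, hu2]
        ring
      have htens : (1 : L) ⊗ₜ[k] (Yb k p a - q * algebraMap k (Bq k p a) γ⁻¹)
          = b ⊗ₜ[k] Xb k p a := by
        apply (EQ k p a L b hb).injective
        rw [EQ_apply, EQ_apply, fT_one_tmul, fT_tmul, hYu, phi_Xb]
      obtain ⟨g, g₁, hg1, hgb, _⟩ := exists_duals k p a L b ha hb
      have h3 := congrArg (PhiMap k p a L g) htens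
      rw [PhiMap_tmul, PhiMap_tmul, hg1, hgb, zero_smul, one_smul] at h3
      exact hX0 h3.symm
  · exact ⟨EQ k p a L b hb⟩
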